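/- Let d ∈ ℕ, let W ⊆ ℝ^d be a finite set of weight vectors with w_true ∈ W, and let p : W → ℝ be a prior with p(w) > 0 for all w ∈ W and ∑_{w∈W} p(w) = 1. Fix 0 < β_min ≤ β_max and a sequence β_n ∈ [β_min, β_max]. Let (φ_n) be i.i.d. random vectors in ℝ^d with common distribution μ having bounded support, and let (I_n) be {−1,+1}-valued random variables, conditionally independent given (φ_n), with P(I_n = ι | φ_n) = σ(ι β_n ⟨w_true, φ_n⟩), where σ(x) = 1/(1 + exp(−x)). Assume that for every w ∈ W with w ≠ w_true, μ({φ : ⟨w, φ⟩ ≠ ⟨w_true, φ⟩}) > 0. Then the posterior P_N(w) = p(w) ∏_{n=1}^N σ(I_n β_n ⟨w, φ_n⟩) / ∑_{w'∈W} p(w') ∏_{n=1}^N σ(I_n β_n ⟨w', φ_n⟩) satisfies P_N(w_true) → 1 almost surely as N → ∞, and P_N(w) → 0 almost surely for every w ≠ w_true. -/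

import Mathlib

open MeasureTheory ProbabilityTheory Filter Topology
open scoped RealInnerProductSpace
open scoped ENNReal NNReal

/-- The logistic function `σ(x) = 1 / (1 + exp (-x))`. -/
noncomputable def logistic (x : ℝ) : ℝ := 1 / (1 + Real.exp (-x))

lemma logistic_pos (x : ℝ) : 0 < logistic x := by
  unfold logistic; positivity

lemma logistic_le_one (x : ℝ) : logistic x ≤ 1 := by
  unfold logistic
  rw [div_le_one (by positivity)]
  nlinarith [Real.exp_pos (-x)]

lemma logistic_neg (x : ℝ) : logistic (-x) = 1 - logistic x := by
  unfold logistic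
  rw [neg_neg]
  have h1 : Real.exp (-x) = (Real.exp x)⁻¹ := Real.exp_neg x
  have h2 : (0:ℝ) < Real.exp x := Real.exp_pos x
  rw [h1]
  field_simp
  ring

lemma logistic_strictMono : StrictMono logistic := by
  intro x y hxy
  unfold logistic
  apply div_lt_div_of_pos_left one_pos (by positivity)
  have : Real.exp (-y) < Real.exp (-x) := Real.exp_lt_exp.mpr (by linarith)
  linarith

lemma continuous_logistic : Continuous logistic := by
  unfold logistic
  exact continuous_const.div (by continuity) (fun x => by positivity)

lemma sqrt_mul_le_add_half {a b : ℝ} (ha : 0 ≤ a) (hb : 0 ≤ b) :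
    Real.sqrt (a * b) ≤ (a + b) / 2 := by
  rw [show (a + b) / 2 = Real.sqrt (((a + b) / 2) ^ 2) from (Real.sqrt_sq (by positivity)).symm]
  exact Real.sqrt_le_sqrt (by nlinarith [sq_nonneg (a - b)])

lemma sqrt_mul_lt_add_half {a b : ℝ} (ha : 0 ≤ a) (hb : 0 ≤ b) (hab : a ≠ b) :
    Real.sqrt (a * b) < (a + b) / 2 := by
  rw [show (a + b) / 2 = Real.sqrt (((a + b) / 2) ^ 2) from (Real.sqrt_sq (by positivity)).symm]
  apply Real.sqrt_lt_sqrt (by positivity)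
  have h := mul_self_pos.mpr (sub_ne_zero.mpr hab)
  nlinarith

lemma hell_le_one {a b : ℝ} (ha0 : 0 ≤ a) (ha1 : a ≤ 1) (hb0 : 0 ≤ b) (hb1 : b ≤ 1) :
    Real.sqrt (a * b) + Real.sqrt ((1 - a) * (1 - b)) ≤ 1 := by
  have h1 := sqrt_mul_le_add_half ha0 hb0
  have h2 := sqrt_mul_le_add_half (by linarith : (0:ℝ) ≤ 1 - a) (by linarith : (0:ℝ) ≤ 1 - b)
  linarith

lemma hell_lt_one {a b : ℝ} (ha0 : 0 ≤ a) (ha1 : a ≤ 1) (hb0 : 0 ≤ b) (hb1 : b ≤ 1)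
    (hab : a ≠ b) :
    Real.sqrt (a * b) + Real.sqrt ((1 - a) * (1 - b)) < 1 := by
  have h1 := sqrt_mul_lt_add_half ha0 hb0 hab
  have h2 := sqrt_mul_le_add_half (by linarith : (0:ℝ) ≤ 1 - a) (by linarith : (0:ℝ) ≤ 1 - b)
  linarith

lemma mul_sqrt_div {a b : ℝ} (ha : 0 ≤ a) (hb : 0 < b) :
    b * Real.sqrt (a / b) = Real.sqrt (a * b) := by
  rw [Real.sqrt_div ha b, Real.sqrt_mul ha b, mul_comm b, div_mul_eq_mul_div, mul_div_assoc,
    Real.div_sqrt]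

lemma ratio_tendsto_zero
    (d : ℕ)
    (w wtrue : EuclideanSpace ℝ (Fin d)) (hwne : w ≠ wtrue)
    (βmin βmax : ℝ) (hβmin : 0 < βmin) (hβ : βmin ≤ βmax)
    (β : ℕ → ℝ) (hβmem : ∀ n, β n ∈ Set.Icc βmin βmax)
    {Ω : Type*} [MeasurableSpace Ω] (P : Measure Ω) [IsProbabilityMeasure P]
    (μ : Measure (EuclideanSpace ℝ (Fin d))) [IsProbabilityMeasure μ]
    (R : ℝ) (hR0 : 0 ≤ R) (hR : ∀ᵐ x ∂μ, ‖x‖ ≤ R)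
    (φ : ℕ → Ω → EuclideanSpace ℝ (Fin d)) (hφmeas : ∀ n, Measurable (φ n))
    (hφlaw : ∀ n, Measure.map (φ n) P = μ)
    (I : ℕ → Ω → ℝ) (hImeas : ∀ n, Measurable (I n))
    (hIval : ∀ n ω, I n ω = -1 ∨ I n ω = 1)
    (hindep : iIndepFun (fun n ω => (φ n ω, I n ω)) P)
    (hcond : ∀ n, ∀ A : Set (EuclideanSpace ℝ (Fin d)), MeasurableSet A →
      ∀ ι : ℝ, (ι = -1 ∨ ι = 1) →
        P {ω | φ n ω ∈ A ∧ I n ω = ι}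
          = ENNReal.ofReal (∫ x in A, logistic (ι * β n * ⟪wtrue, x⟫) ∂μ))
    (hdiffw : 0 < μ {x | ⟪w, x⟫ ≠ ⟪wtrue, x⟫}) :
    ∀ᵐ ω ∂P, Tendsto (fun N =>
        (∏ n ∈ Finset.range N, logistic (I n ω * β n * ⟪w, φ n ω⟫)) /
          (∏ n ∈ Finset.range N, logistic (I n ω * β n * ⟪wtrue, φ n ω⟫)))
      atTop (𝓝 0) := by
  classical
  have hβmax : 0 < βmax := lt_of_lt_of_le hβmin hβ
  have hwcont : Continuous fun x : EuclideanSpace ℝ (Fin d) => ⟪w, x⟫ :=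
    Continuous.inner continuous_const continuous_id
  have htcont : Continuous fun x : EuclideanSpace ℝ (Fin d) => ⟪wtrue, x⟫ :=
    Continuous.inner continuous_const continuous_id
  -- choose δ
  obtain ⟨k, hk⟩ : ∃ k : ℕ, 0 < μ {x | 1 / ((k : ℝ) + 1) ≤ |⟪w, x⟫ - ⟪wtrue, x⟫|} := by
    by_contra h
    push_neg at h
    have h0 : ∀ k : ℕ, μ {x | 1 / ((k : ℝ) + 1) ≤ |⟪w, x⟫ - ⟪wtrue, x⟫|} = 0 :=
      fun k => le_antisymm (h k) zero_le
    have hsub : {x | ⟪w, x⟫ ≠ ⟪wtrue, x⟫} ⊆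
        ⋃ k : ℕ, {x | 1 / ((k : ℝ) + 1) ≤ |⟪w, x⟫ - ⟪wtrue, x⟫|} := by
      intro x hx
      have hpos : 0 < |⟪w, x⟫ - ⟪wtrue, x⟫| := abs_pos.mpr (sub_ne_zero.mpr hx)
      obtain ⟨k, hk'⟩ := exists_nat_one_div_lt hpos
      exact Set.mem_iUnion.mpr ⟨k, le_of_lt hk'⟩
    exact absurd (measure_mono_null hsub (measure_iUnion_null h0)) hdiffw.ne'
  set δ : ℝ := 1 / ((k : ℝ) + 1) with hδdef
  have hδpos : 0 < δ := by positivity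
  set A : Set (EuclideanSpace ℝ (Fin d)) := {x | δ ≤ |⟪w, x⟫ - ⟪wtrue, x⟫|} with hAdef
  have hAmeas : MeasurableSet A :=
    measurableSet_le measurable_const ((hwcont.sub htcont).abs.measurable)
  have hA : 0 < μ A := hk
  -- constants
  set C : ℝ := (‖w‖ + ‖wtrue‖) * R + 1 with hCdef
  have hCpos : 0 < C := by positivity
  have hCw : ∀ x : EuclideanSpace ℝ (Fin d), ‖x‖ ≤ R → |⟪w, x⟫| ≤ C := by
    intro x hx
    have h1 : |⟪w, x⟫| ≤ ‖w‖ * ‖x‖ := abs_real_inner_le_norm w x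
    have h2 : ‖w‖ * ‖x‖ ≤ ‖w‖ * R := by
      apply mul_le_mul_of_nonneg_left hx (norm_nonneg _)
    nlinarith [norm_nonneg w, norm_nonneg wtrue]
  have hCt : ∀ x : EuclideanSpace ℝ (Fin d), ‖x‖ ≤ R → |⟪wtrue, x⟫| ≤ C := by
    intro x hx
    have h1 : |⟪wtrue, x⟫| ≤ ‖wtrue‖ * ‖x‖ := abs_real_inner_le_norm wtrue x
    have h2 : ‖wtrue‖ * ‖x‖ ≤ ‖wtrue‖ * R := by
      apply mul_le_mul_of_nonneg_left hx (norm_nonneg _)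
    nlinarith [norm_nonneg w, norm_nonneg wtrue]
  -- Hellinger affinity function and compactness
  set F : ℝ × ℝ × ℝ → ℝ := fun q =>
    Real.sqrt (logistic (q.1 * q.2.1) * logistic (q.1 * q.2.2)) +
      Real.sqrt (logistic (-(q.1 * q.2.1)) * logistic (-(q.1 * q.2.2))) with hFdef
  have hc1 : Continuous fun q : ℝ × ℝ × ℝ => q.1 * q.2.1 :=
    continuous_fst.mul (continuous_fst.comp continuous_snd)
  have hc2 : Continuous fun q : ℝ × ℝ × ℝ => q.1 * q.2.2 :=
    continuous_fst.mul (continuous_snd.comp continuous_snd)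
  have hFcont : Continuous F := by
    apply Continuous.add
    · exact ((continuous_logistic.comp hc1).mul (continuous_logistic.comp hc2)).sqrt
    · exact ((continuous_logistic.comp hc1.neg).mul (continuous_logistic.comp hc2.neg)).sqrt
  set S : Set (ℝ × ℝ × ℝ) :=
    (Set.Icc βmin βmax ×ˢ (Set.Icc (-C) C ×ˢ Set.Icc (-C) C)) ∩ {q | δ ≤ |q.2.1 - q.2.2|}
    with hSdef
  have hScompact : IsCompact S := by
    apply IsCompact.inter_right (isCompact_Icc.prod (isCompact_Icc.prod isCompact_Icc))
    exact isClosed_le continuous_const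
      ((continuous_fst.comp continuous_snd).sub (continuous_snd.comp continuous_snd)).abs
  -- S is nonempty
  have hgoodnull : μ {x : EuclideanSpace ℝ (Fin d) | ¬ ‖x‖ ≤ R} = 0 := by
    simpa [ae_iff] using hR
  have hAgood : (A ∩ {x | ‖x‖ ≤ R}).Nonempty := by
    apply nonempty_of_measure_ne_zero (μ := μ)
    intro h0
    have hcover : μ A ≤ μ (A ∩ {x | ‖x‖ ≤ R}) + μ (A \ {x | ‖x‖ ≤ R}) := by
      refine le_trans (measure_mono ?_) (measure_union_le _ _)
      intro x hx
      by_cases hb : ‖x‖ ≤ R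
      · exact Or.inl ⟨hx, hb⟩
      · exact Or.inr ⟨hx, hb⟩
    have hnull2 : μ (A \ {x | ‖x‖ ≤ R}) = 0 :=
      measure_mono_null (fun x hx => hx.2) hgoodnull
    rw [h0, hnull2, add_zero] at hcover
    exact absurd (le_antisymm hcover zero_le) hA.ne'
  obtain ⟨x₀, hx₀A, hx₀R⟩ := hAgood
  have hSne : S.Nonempty := by
    refine ⟨(βmin, ⟪w, x₀⟫, ⟪wtrue, x₀⟫), ⟨⟨?_, ?_, ?_⟩, ?_⟩⟩
    · exact ⟨le_refl _, hβ⟩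
    · exact abs_le.mp (hCw x₀ hx₀R)
    · exact abs_le.mp (hCt x₀ hx₀R)
    · exact hx₀A
  obtain ⟨q₀, hq₀S, hq₀max⟩ := hScompact.exists_isMaxOn hSne hFcont.continuousOn
  set ρ₀ : ℝ := F q₀ with hρ₀def
  have hρ₀0 : 0 ≤ ρ₀ := add_nonneg (Real.sqrt_nonneg _) (Real.sqrt_nonneg _)
  have hFform : ∀ q : ℝ × ℝ × ℝ, F q =
      Real.sqrt (logistic (q.1 * q.2.1) * logistic (q.1 * q.2.2)) +
        Real.sqrt ((1 - logistic (q.1 * q.2.1)) * (1 - logistic (q.1 * q.2.2))) := by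
    intro q
    rw [hFdef]
    simp only [logistic_neg]
  have hρ₀1 : ρ₀ < 1 := by
    obtain ⟨⟨hβq, hsq, htq⟩, hstq⟩ := hq₀S
    have hβpos : 0 < q₀.1 := lt_of_lt_of_le hβmin hβq.1
    have hst : q₀.2.1 ≠ q₀.2.2 := by
      intro h
      have hstq' : δ ≤ |q₀.2.1 - q₀.2.2| := hstq
      rw [h, sub_self, abs_zero] at hstq'
      exact absurd hstq' (not_le.mpr hδpos)
    have hlne : logistic (q₀.1 * q₀.2.1) ≠ logistic (q₀.1 * q₀.2.2) := by
      intro h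
      exact hst (mul_left_cancel₀ hβpos.ne' (logistic_strictMono.injective h))
    rw [hρ₀def, hFform]
    exact hell_lt_one (logistic_pos _).le (logistic_le_one _)
      (logistic_pos _).le (logistic_le_one _) hlne
  -- ρ
  have hμAfin : μ A ≠ ⊤ := measure_ne_top μ A
  have hμA0 : 0 < (μ A).toReal := ENNReal.toReal_pos hA.ne' hμAfin
  have hμA1 : (μ A).toReal ≤ 1 := by
    calc (μ A).toReal ≤ (μ Set.univ).toReal :=
          ENNReal.toReal_mono (measure_ne_top _ _) (measure_mono (Set.subset_univ A))
      _ = 1 := by simp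
  set ρ : ℝ := 1 - (1 - ρ₀) * (μ A).toReal with hρdef
  have hρ1 : ρ < 1 := by
    have : 0 < (1 - ρ₀) * (μ A).toReal := mul_pos (by linarith) hμA0
    rw [hρdef]; linarith
  have hρ0 : 0 ≤ ρ := by
    rw [hρdef]
    nlinarith
  -- the per-round likelihood-ratio random variables
  set g : ℕ → (EuclideanSpace ℝ (Fin d)) × ℝ → ℝ := fun n q =>
    Real.sqrt (logistic (q.2 * β n * ⟪w, q.1⟫) / logistic (q.2 * β n * ⟪wtrue, q.1⟫)) with hgdef
  have hgcont : ∀ n, Continuous (g n) := by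
    intro n
    apply Continuous.sqrt
    apply Continuous.div
    · exact continuous_logistic.comp
        ((continuous_snd.mul continuous_const).mul (Continuous.inner continuous_const continuous_fst))
    · exact continuous_logistic.comp
        ((continuous_snd.mul continuous_const).mul (Continuous.inner continuous_const continuous_fst))
    · exact fun q => (logistic_pos _).ne'
  set X : ℕ → Ω → ℝ := fun n => g n ∘ fun ω => (φ n ω, I n ω) with hXdef
  have hXmeas : ∀ n, Measurable (X n) :=
    fun n => (hgcont n).measurable.comp ((hφmeas n).prodMk (hImeas n))
  have hXnonneg : ∀ n ω, 0 ≤ X n ω := fun n ω => Real.sqrt_nonneg _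
  have hXindep : iIndepFun X P :=
    hindep.comp g (fun n => (hgcont n).measurable)
  -- a.e. bound on the features
  have hφR : ∀ n, ∀ᵐ ω ∂P, ‖φ n ω‖ ≤ R := by
    intro n
    have hms : MeasurableSet {x : EuclideanSpace ℝ (Fin d) | ‖x‖ ≤ R} :=
      measurableSet_le continuous_norm.measurable measurable_const
    rw [ae_iff]
    have : {ω | ¬ ‖φ n ω‖ ≤ R} = φ n ⁻¹' {x | ‖x‖ ≤ R}ᶜ := rfl
    rw [this, ← Measure.map_apply (hφmeas n) hms.compl, hφlaw n]
    simpa [ae_iff, Set.compl_setOf, not_le] using hR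
  set Bd : ℝ := Real.sqrt (1 / logistic (-(βmax * C))) with hBddef
  have hXbound : ∀ n, ∀ᵐ ω ∂P, X n ω ≤ Bd := by
    intro n
    filter_upwards [hφR n] with ω hω
    have hIabs : |I n ω| = 1 := by rcases hIval n ω with h | h <;> simp [h]
    have hargt : -(βmax * C) ≤ I n ω * β n * ⟪wtrue, φ n ω⟫ := by
      have habs : |I n ω * β n * ⟪wtrue, φ n ω⟫| ≤ βmax * C := by
        rw [abs_mul, abs_mul, hIabs, one_mul]
        have hb : |β n| ≤ βmax := by
          rw [abs_of_pos (lt_of_lt_of_le hβmin (hβmem n).1)]; exact (hβmem n).2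
        exact mul_le_mul hb (hCt _ hω) (abs_nonneg _) hβmax.le
      linarith [neg_abs_le (I n ω * β n * ⟪wtrue, φ n ω⟫)]
    have hden : logistic (-(βmax * C)) ≤ logistic (I n ω * β n * ⟪wtrue, φ n ω⟫) :=
      logistic_strictMono.monotone hargt
    have hfrac : logistic (I n ω * β n * ⟪w, φ n ω⟫) /
        logistic (I n ω * β n * ⟪wtrue, φ n ω⟫) ≤ 1 / logistic (-(βmax * C)) :=
      div_le_div₀ (by norm_num) (logistic_le_one _) (logistic_pos _) hden
    exact Real.sqrt_le_sqrt hfrac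
  have hXint : ∀ n, Integrable (X n) P := by
    intro n
    refine Integrable.mono' (integrable_const Bd) (hXmeas n).aestronglyMeasurable ?_
    filter_upwards [hXbound n] with ω h
    rwa [Real.norm_eq_abs, abs_of_nonneg (hXnonneg n ω)]
  -- the law of φ n restricted to the event {I n = ι}
  have hlaw : ∀ n (ι : ℝ), (ι = -1 ∨ ι = 1) →
      (P.restrict {ω | I n ω = ι}).map (φ n)
        = μ.withDensity (fun x => ENNReal.ofReal (logistic (ι * β n * ⟪wtrue, x⟫))) := by
    intro n ι hι
    have hLcont : Continuous fun x : EuclideanSpace ℝ (Fin d) =>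
        logistic (ι * β n * ⟪wtrue, x⟫) :=
      continuous_logistic.comp (continuous_const.mul htcont)
    ext B hB
    rw [Measure.map_apply (hφmeas n) hB,
      Measure.restrict_apply ((hφmeas n) hB), withDensity_apply _ hB]
    have hset : φ n ⁻¹' B ∩ {ω | I n ω = ι} = {ω | φ n ω ∈ B ∧ I n ω = ι} := rfl
    rw [hset, hcond n B hB ι hι]
    rw [ofReal_integral_eq_lintegral_ofReal]
    · refine Integrable.mono' (integrable_const 1) hLcont.aestronglyMeasurable ?_
      exact Eventually.of_forall fun x => by
        rw [Real.norm_eq_abs, abs_of_pos (logistic_pos _)]; exact logistic_le_one _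
    · exact Eventually.of_forall fun x => (logistic_pos _).le
  have hsetint : ∀ n (ι : ℝ), (ι = -1 ∨ ι = 1) →
      ∀ f : EuclideanSpace ℝ (Fin d) → ℝ, Continuous f →
      ∫ ω in {ω | I n ω = ι}, f (φ n ω) ∂P
        = ∫ x, logistic (ι * β n * ⟪wtrue, x⟫) * f x ∂μ := by
    intro n ι hι f hf
    have h1 : ∫ ω in {ω | I n ω = ι}, f (φ n ω) ∂P
        = ∫ x, f x ∂((P.restrict {ω | I n ω = ι}).map (φ n)) :=
      (integral_map (hφmeas n).aemeasurable hf.aestronglyMeasurable).symm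
    rw [h1, hlaw n ι hι]
    have hLm : Measurable fun x : EuclideanSpace ℝ (Fin d) =>
        (logistic (ι * β n * ⟪wtrue, x⟫)).toNNReal :=
      (continuous_logistic.comp (continuous_const.mul htcont)).measurable.real_toNNReal
    have hdens : (fun x : EuclideanSpace ℝ (Fin d) =>
        ENNReal.ofReal (logistic (ι * β n * ⟪wtrue, x⟫)))
        = fun x => ((logistic (ι * β n * ⟪wtrue, x⟫)).toNNReal : ℝ≥0∞) := rfl
    rw [hdens, integral_withDensity_eq_integral_smul hLm f]
    congr 1
    funext x
    rw [NNReal.smul_def, Real.coe_toNNReal _ (logistic_pos _).le, smul_eq_mul]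
  have hF01 : ∀ q : ℝ × ℝ × ℝ, 0 ≤ F q ∧ F q ≤ 2 := by
    intro q
    constructor
    · exact add_nonneg (Real.sqrt_nonneg _) (Real.sqrt_nonneg _)
    · have h1 : Real.sqrt (logistic (q.1 * q.2.1) * logistic (q.1 * q.2.2)) ≤ 1 :=
        Real.sqrt_le_one.mpr (by
          nlinarith [logistic_pos (q.1 * q.2.1), logistic_le_one (q.1 * q.2.1),
            logistic_pos (q.1 * q.2.2), logistic_le_one (q.1 * q.2.2)])
      have h2 : Real.sqrt (logistic (-(q.1 * q.2.1)) * logistic (-(q.1 * q.2.2))) ≤ 1 :=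
        Real.sqrt_le_one.mpr (by
          nlinarith [logistic_pos (-(q.1 * q.2.1)), logistic_le_one (-(q.1 * q.2.1)),
            logistic_pos (-(q.1 * q.2.2)), logistic_le_one (-(q.1 * q.2.2))])
      simp only [hFdef]
      linarith
  -- the expectation bound
  have hEX : ∀ n, ∫ ω, X n ω ∂P ≤ ρ := by
    intro n
    have hS1 : MeasurableSet {ω | I n ω = (1:ℝ)} := hImeas n (measurableSet_singleton 1)
    have hcompl : {ω | I n ω = (1:ℝ)}ᶜ = {ω | I n ω = (-1:ℝ)} := by
      ext ω
      simp only [Set.mem_compl_iff, Set.mem_setOf_eq]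
      rcases hIval n ω with h | h <;> simp [h] <;> norm_num
    have hf1cont : Continuous fun x : EuclideanSpace ℝ (Fin d) => g n (x, (1:ℝ)) :=
      (hgcont n).comp (continuous_id.prodMk continuous_const)
    have hfm1cont : Continuous fun x : EuclideanSpace ℝ (Fin d) => g n (x, (-1:ℝ)) :=
      (hgcont n).comp (continuous_id.prodMk continuous_const)
    have hsplit : ∫ ω, X n ω ∂P
        = ∫ x, logistic (1 * β n * ⟪wtrue, x⟫) * g n (x, 1) ∂μ
          + ∫ x, logistic ((-1) * β n * ⟪wtrue, x⟫) * g n (x, -1) ∂μ := by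
      rw [← integral_add_compl hS1 (hXint n), hcompl]
      congr 1
      · rw [← hsetint n 1 (Or.inr rfl) _ hf1cont]
        apply setIntegral_congr_fun hS1
        intro ω hω
        have hω' : I n ω = 1 := hω
        show g n (φ n ω, I n ω) = g n (φ n ω, 1)
        rw [hω']
      · have hSm1 : MeasurableSet {ω | I n ω = (-1:ℝ)} := hImeas n (measurableSet_singleton (-1))
        rw [← hsetint n (-1) (Or.inl rfl) _ hfm1cont]
        apply setIntegral_congr_fun hSm1
        intro ω hω
        have hω' : I n ω = -1 := hω
        show g n (φ n ω, I n ω) = g n (φ n ω, -1)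
        rw [hω']
    have hterm : ∀ (ι : ℝ) (x : EuclideanSpace ℝ (Fin d)),
        logistic (ι * β n * ⟪wtrue, x⟫) * g n (x, ι)
        = Real.sqrt (logistic (ι * β n * ⟪w, x⟫) * logistic (ι * β n * ⟪wtrue, x⟫)) := by
      intro ι x
      show logistic (ι * β n * ⟪wtrue, x⟫) *
          Real.sqrt (logistic (ι * β n * ⟪w, x⟫) / logistic (ι * β n * ⟪wtrue, x⟫)) = _
      exact mul_sqrt_div (logistic_pos _).le (logistic_pos _)
    have hintι : ∀ ι : ℝ, Integrable
        (fun x => logistic (ι * β n * ⟪wtrue, x⟫) * g n (x, ι)) μ := by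
      intro ι
      refine Integrable.mono' (integrable_const 1) ?_ ?_
      · exact ((continuous_logistic.comp (continuous_const.mul htcont)).mul
          ((hgcont n).comp (continuous_id.prodMk continuous_const))).aestronglyMeasurable
      · refine Eventually.of_forall fun x => ?_
        rw [hterm ι x, Real.norm_eq_abs, abs_of_nonneg (Real.sqrt_nonneg _)]
        refine Real.sqrt_le_one.mpr ?_
        nlinarith [logistic_pos (ι * β n * ⟪w, x⟫), logistic_le_one (ι * β n * ⟪w, x⟫),
          logistic_pos (ι * β n * ⟪wtrue, x⟫), logistic_le_one (ι * β n * ⟪wtrue, x⟫)]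
    have hFx : (fun x => logistic (1 * β n * ⟪wtrue, x⟫) * g n (x, 1)
        + logistic ((-1) * β n * ⟪wtrue, x⟫) * g n (x, -1))
        = fun x : EuclideanSpace ℝ (Fin d) => F (β n, ⟪w, x⟫, ⟪wtrue, x⟫) := by
      funext x
      rw [hterm, hterm, hFdef]
      simp only [one_mul, neg_one_mul, neg_mul]
    have hFint : Integrable (fun x : EuclideanSpace ℝ (Fin d) =>
        F (β n, ⟪w, x⟫, ⟪wtrue, x⟫)) μ := by
      refine Integrable.mono' (integrable_const 2) ?_ ?_
      · exact (hFcont.comp (continuous_const.prodMk (hwcont.prodMk htcont))).aestronglyMeasurable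
      · refine Eventually.of_forall fun x => ?_
        rw [Real.norm_eq_abs, abs_of_nonneg (hF01 _).1]
        exact (hF01 _).2
    set bnd : EuclideanSpace ℝ (Fin d) → ℝ := fun x => if x ∈ A then ρ₀ else 1 with hbnddef
    have hbnd_eq : bnd = fun x => Set.indicator A (fun _ => ρ₀ - 1) x + 1 := by
      funext x
      by_cases hx : x ∈ A <;> simp [hbnddef, hx]
    have hbndint : Integrable bnd μ := by
      rw [hbnd_eq]
      exact ((integrable_const (ρ₀ - 1)).indicator hAmeas).add (integrable_const 1)
    have hbndval : ∫ x, bnd x ∂μ = ρ := by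
      have : ∫ x, bnd x ∂μ = ∫ x, (Set.indicator A (fun _ => ρ₀ - 1) x + 1) ∂μ := by
        rw [hbnd_eq]
      rw [this, integral_add ((integrable_const (ρ₀ - 1)).indicator hAmeas) (integrable_const 1),
        integral_indicator_const _ hAmeas, integral_const]
      simp only [smul_eq_mul, mul_one, measure_univ, ENNReal.toReal_one, Measure.real]
      rw [hρdef]
      ring
    have hle : ∀ᵐ x ∂μ, F (β n, ⟪w, x⟫, ⟪wtrue, x⟫) ≤ bnd x := by
      filter_upwards [hR] with x hx
      by_cases hxA : x ∈ A
      · have hmem : ((β n, ⟪w, x⟫, ⟪wtrue, x⟫) : ℝ × ℝ × ℝ) ∈ S :=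
          ⟨⟨hβmem n, abs_le.mp (hCw x hx), abs_le.mp (hCt x hx)⟩, hxA⟩
        have := hq₀max hmem
        rw [hbnddef]
        simp only [hxA, if_true]
        exact this
      · rw [hbnddef]
        simp only [hxA, if_false]
        rw [hFform]
        exact hell_le_one (logistic_pos _).le (logistic_le_one _)
          (logistic_pos _).le (logistic_le_one _)
    calc ∫ ω, X n ω ∂P
        = ∫ x, F (β n, ⟪w, x⟫, ⟪wtrue, x⟫) ∂μ := by
          rw [hsplit, ← integral_add (hintι 1) (hintι (-1)), hFx]
      _ ≤ ∫ x, bnd x ∂μ := integral_mono_ae hFint hbndint hle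
      _ = ρ := hbndval
  -- product expectations
  have hprodint : ∀ N, ∫ ω, ∏ n ∈ Finset.range N, X n ω ∂P
      = ∏ n ∈ Finset.range N, ∫ ω, X n ω ∂P := by
    intro N
    induction N with
    | zero => simp
    | succ N ih =>
      have hprodmeas : Measurable (∏ n ∈ Finset.range N, X n) := by
        have h := Finset.measurable_prod (Finset.range N)
          (fun i (_ : i ∈ Finset.range N) => hXmeas i)
        have heq : (fun a => ∏ i ∈ Finset.range N, X i a) = ∏ n ∈ Finset.range N, X n := by
          funext a; rw [Finset.prod_apply]
        rwa [heq] at h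
      have hprodnonneg : (0 : Ω → ℝ) ≤ ∏ n ∈ Finset.range N, X n := fun ω => by
        rw [Pi.zero_apply, Finset.prod_apply]
        exact Finset.prod_nonneg fun i _ => hXnonneg i ω
      have hmul := (ProbabilityTheory.iIndepFun.indepFun_prod_range_succ hXindep hXmeas N).integral_mul_eq_mul_integral
        hprodmeas.aestronglyMeasurable (hXmeas N).aestronglyMeasurable
      have hfun : (fun ω => ∏ n ∈ Finset.range (N+1), X n ω)
          = (∏ n ∈ Finset.range N, X n) * X N := by
        funext ω
        rw [Pi.mul_apply, Finset.prod_apply, Finset.prod_range_succ]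
      have hprodapp : (fun ω => ∏ n ∈ Finset.range N, X n ω)
          = ∏ n ∈ Finset.range N, X n := by
        funext ω; rw [Finset.prod_apply]
      rw [hfun]
      show integral P ((∏ n ∈ Finset.range N, X n) * X N) = _
      rw [hmul, Finset.prod_range_succ, ← ih, hprodapp]
  -- Markov and Borel-Cantelli
  set r : ℝ := max ρ (1/2) with hrdef
  have hr0 : (0:ℝ) < r := lt_of_lt_of_le one_half_pos (le_max_right _ _)
  have hr1 : r < 1 := max_lt hρ1 (by norm_num)
  have hEM : ∀ N, ∫ ω, ∏ n ∈ Finset.range N, X n ω ∂P ≤ r ^ N := by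
    intro N
    rw [hprodint N]
    calc ∏ n ∈ Finset.range N, ∫ ω, X n ω ∂P
        ≤ ∏ _n ∈ Finset.range N, r :=
          Finset.prod_le_prod (fun i _ => integral_nonneg fun ω => hXnonneg i ω)
            (fun i _ => le_trans (hEX i) (le_max_left _ _))
      _ = r ^ N := by rw [Finset.prod_const, Finset.card_range]
  set sr : ℝ := Real.sqrt r with hsrdef
  have hsq0 : 0 < sr := Real.sqrt_pos.mpr hr0
  have hsqsq : sr * sr = r := Real.mul_self_sqrt hr0.le
  have hsq1 : sr < 1 := by nlinarith
  have hprodInt : ∀ N, Integrable (fun ω => ∏ n ∈ Finset.range N, X n ω) P := by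
    intro N
    refine Integrable.mono' (integrable_const (Bd ^ N))
      (Finset.measurable_prod _ fun i _ => hXmeas i).aestronglyMeasurable ?_
    have hall : ∀ᵐ ω ∂P, ∀ n ∈ Finset.range N, X n ω ≤ Bd := by
      have h := ae_all_iff.mpr (fun n : ℕ => hXbound n)
      filter_upwards [h] with ω hω n _ using hω n
    filter_upwards [hall] with ω hω
    rw [Real.norm_eq_abs, abs_of_nonneg (Finset.prod_nonneg fun i _ => hXnonneg i ω)]
    calc ∏ n ∈ Finset.range N, X n ω ≤ ∏ _n ∈ Finset.range N, Bd :=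
        Finset.prod_le_prod (fun i _ => hXnonneg i ω) (fun i hi => hω i hi)
      _ = Bd ^ N := by rw [Finset.prod_const, Finset.card_range]
  set Ev : ℕ → Set Ω := fun N => {ω | sr ^ N ≤ ∏ n ∈ Finset.range N, X n ω} with hEvdef
  have hPE : ∀ N, P (Ev N) ≤ ENNReal.ofReal (sr ^ N) := by
    intro N
    have hm := mul_meas_ge_le_integral_of_nonneg
      (Eventually.of_forall fun ω => Finset.prod_nonneg fun i _ => hXnonneg i ω)
      (hprodInt N) (sr ^ N)
    have hpow : (0:ℝ) < sr ^ N := pow_pos hsq0 N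
    have h2 : (P (Ev N)).toReal ≤ sr ^ N := by
      have hle : sr ^ N * (P (Ev N)).toReal ≤ r ^ N := le_trans hm (hEM N)
      have hrr : r ^ N = sr ^ N * sr ^ N := by rw [← mul_pow, hsqsq]
      rw [hrr] at hle
      exact le_of_mul_le_mul_left hle hpow
    exact (ENNReal.le_ofReal_iff_toReal_le (measure_ne_top P _) (pow_nonneg hsq0.le N)).mpr h2
  have htsum : ∑' N, P (Ev N) ≠ ⊤ := by
    apply ne_top_of_le_ne_top _ (ENNReal.tsum_le_tsum hPE)
    have heq : ∀ N, ENNReal.ofReal (sr ^ N) = ENNReal.ofReal sr ^ N :=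
      fun N => ENNReal.ofReal_pow hsq0.le N
    rw [tsum_congr heq, ENNReal.tsum_geometric]
    refine ENNReal.inv_ne_top.mpr ?_
    have hlt : ENNReal.ofReal sr < 1 := by
      rw [← ENNReal.ofReal_one]
      exact ENNReal.ofReal_lt_ofReal_iff_of_nonneg hsq0.le |>.mpr hsq1
    exact (tsub_pos_of_lt hlt).ne'
  filter_upwards [ae_eventually_notMem htsum] with ω hω
  have hev : ∀ᶠ N in atTop,
      (∏ n ∈ Finset.range N, logistic (I n ω * β n * ⟪w, φ n ω⟫)) /
        (∏ n ∈ Finset.range N, logistic (I n ω * β n * ⟪wtrue, φ n ω⟫)) ≤ r ^ N := by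
    filter_upwards [hω] with N hN
    have hlt : ∏ n ∈ Finset.range N, X n ω < sr ^ N := lt_of_not_ge hN
    have hQ : (∏ n ∈ Finset.range N, logistic (I n ω * β n * ⟪w, φ n ω⟫)) /
        (∏ n ∈ Finset.range N, logistic (I n ω * β n * ⟪wtrue, φ n ω⟫))
        = (∏ n ∈ Finset.range N, X n ω) ^ 2 := by
      rw [← Finset.prod_pow]
      have hsq' : ∀ n ∈ Finset.range N, (X n ω) ^ 2
          = logistic (I n ω * β n * ⟪w, φ n ω⟫) / logistic (I n ω * β n * ⟪wtrue, φ n ω⟫) :=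
        fun n _ => Real.sq_sqrt (div_nonneg (logistic_pos _).le (logistic_pos _).le)
      rw [Finset.prod_congr rfl hsq', Finset.prod_div_distrib]
    rw [hQ]
    calc (∏ n ∈ Finset.range N, X n ω) ^ 2 ≤ (sr ^ N) ^ 2 :=
        pow_le_pow_left₀ (Finset.prod_nonneg fun i _ => hXnonneg i ω) hlt.le 2
      _ = r ^ N := by
          rw [← pow_mul, mul_comm N 2, pow_mul]
          congr 1
          rw [pow_two, hsqsq]
  refine tendsto_of_tendsto_of_tendsto_of_le_of_le' tendsto_const_nhds
    (tendsto_pow_atTop_nhds_zero_of_lt_one hr0.le hr1) ?_ hev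
  exact Eventually.of_forall fun N =>
    div_nonneg (Finset.prod_nonneg fun i _ => (logistic_pos _).le)
      (Finset.prod_nonneg fun i _ => (logistic_pos _).le)

/-- Let `W` be a finite hypothesis set of weight vectors containing `w_true`, `p` a prior that is
positive on `W` and sums to one, `(β_n)` rationality parameters in `[β_min, β_max]` with
`0 < β_min ≤ β_max`, `(φ_n)` i.i.d. feature-difference vectors with common distribution `μ` of
bounded support, and `(I_n)` `{-1, +1}`-valued responses, conditionally independent given the
queries, with `P(I_n = ι | φ_n) = σ(ι β_n ⟨w_true, φ_n⟩)` (encoded here by independence of the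
pairs `(φ_n, I_n)` across `n` together with the joint law of each pair). If every `w ∈ W` with
`w ≠ w_true` satisfies `μ({φ : ⟨w, φ⟩ ≠ ⟨w_true, φ⟩}) > 0`, then the Bayesian posterior
`P_N(w) = p(w) ∏_{n < N} σ(I_n β_n ⟨w, φ_n⟩) / ∑_{w' ∈ W} p(w') ∏_{n < N} σ(I_n β_n ⟨w', φ_n⟩)`
satisfies `P_N(w_true) → 1` almost surely and `P_N(w) → 0` almost surely for every
`w ∈ W` with `w ≠ w_true`. -/
theorem posterior_tendsto_true_weights
    (d : ℕ) (W : Finset (EuclideanSpace ℝ (Fin d)))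
    (wtrue : EuclideanSpace ℝ (Fin d)) (hwtrue : wtrue ∈ W)
    (p : EuclideanSpace ℝ (Fin d) → ℝ) (hp : ∀ w ∈ W, 0 < p w)
    (hpsum : ∑ w ∈ W, p w = 1)
    (βmin βmax : ℝ) (hβmin : 0 < βmin) (hβ : βmin ≤ βmax)
    (β : ℕ → ℝ) (hβmem : ∀ n, β n ∈ Set.Icc βmin βmax)
    {Ω : Type*} [MeasurableSpace Ω] (P : Measure Ω) [IsProbabilityMeasure P]
    (μ : Measure (EuclideanSpace ℝ (Fin d))) [IsProbabilityMeasure μ]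
    (hbdd : ∃ R : ℝ, ∀ᵐ x ∂μ, ‖x‖ ≤ R)
    (φ : ℕ → Ω → EuclideanSpace ℝ (Fin d)) (hφmeas : ∀ n, Measurable (φ n))
    (hφlaw : ∀ n, Measure.map (φ n) P = μ)
    (I : ℕ → Ω → ℝ) (hImeas : ∀ n, Measurable (I n))
    (hIval : ∀ n ω, I n ω = -1 ∨ I n ω = 1)
    (hindep : iIndepFun (fun n ω => (φ n ω, I n ω)) P)
    (hcond : ∀ n, ∀ A : Set (EuclideanSpace ℝ (Fin d)), MeasurableSet A →
      ∀ ι : ℝ, (ι = -1 ∨ ι = 1) →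
        P {ω | φ n ω ∈ A ∧ I n ω = ι}
          = ENNReal.ofReal (∫ x in A, logistic (ι * β n * ⟪wtrue, x⟫) ∂μ))
    (hdiff : ∀ w ∈ W, w ≠ wtrue → 0 < μ {x | ⟪w, x⟫ ≠ ⟪wtrue, x⟫}) :
    (∀ᵐ ω ∂P, Tendsto
      (fun N =>
        (p wtrue * ∏ n ∈ Finset.range N, logistic (I n ω * β n * ⟪wtrue, φ n ω⟫)) /
          ∑ w' ∈ W, p w' * ∏ n ∈ Finset.range N, logistic (I n ω * β n * ⟪w', φ n ω⟫))
      atTop (𝓝 1)) ∧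
    (∀ w ∈ W, w ≠ wtrue → ∀ᵐ ω ∂P, Tendsto
      (fun N =>
        (p w * ∏ n ∈ Finset.range N, logistic (I n ω * β n * ⟪w, φ n ω⟫)) /
          ∑ w' ∈ W, p w' * ∏ n ∈ Finset.range N, logistic (I n ω * β n * ⟪w', φ n ω⟫))
      atTop (𝓝 0)) := by
  classical
  obtain ⟨R, hR⟩ := hbdd
  have hR' : ∀ᵐ x ∂μ, ‖x‖ ≤ max R 0 := hR.mono fun x hx => le_trans hx (le_max_left _ _)
  have key : ∀ w ∈ W, w ≠ wtrue → ∀ᵐ ω ∂P, Tendsto (fun N =>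
      (∏ n ∈ Finset.range N, logistic (I n ω * β n * ⟪w, φ n ω⟫)) /
        (∏ n ∈ Finset.range N, logistic (I n ω * β n * ⟪wtrue, φ n ω⟫))) atTop (𝓝 0) :=
    fun w hw hne => ratio_tendsto_zero d w wtrue hne βmin βmax hβmin hβ β hβmem P μ
      (max R 0) (le_max_right _ _) hR' φ hφmeas hφlaw I hImeas hIval hindep hcond
      (hdiff w hw hne)
  have hall : ∀ᵐ ω ∂P, ∀ w ∈ (W : Set (EuclideanSpace ℝ (Fin d))), w ≠ wtrue →
      Tendsto (fun N =>
        (∏ n ∈ Finset.range N, logistic (I n ω * β n * ⟪w, φ n ω⟫)) /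
          (∏ n ∈ Finset.range N, logistic (I n ω * β n * ⟪wtrue, φ n ω⟫))) atTop (𝓝 0) := by
    rw [ae_ball_iff W.countable_toSet]
    intro w hw
    by_cases hne : w = wtrue
    · exact Eventually.of_forall fun ω h => absurd hne h
    · exact (key w (Finset.mem_coe.mp hw) hne).mono fun ω h _ => h
  -- pointwise algebra
  have main : ∀ ω, (∀ w ∈ (W : Set (EuclideanSpace ℝ (Fin d))), w ≠ wtrue →
      Tendsto (fun N =>
        (∏ n ∈ Finset.range N, logistic (I n ω * β n * ⟪w, φ n ω⟫)) /
          (∏ n ∈ Finset.range N, logistic (I n ω * β n * ⟪wtrue, φ n ω⟫))) atTop (𝓝 0)) →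
      ∀ w ∈ W, Tendsto (fun N =>
        (p w * ∏ n ∈ Finset.range N, logistic (I n ω * β n * ⟪w, φ n ω⟫)) /
          ∑ w' ∈ W, p w' * ∏ n ∈ Finset.range N, logistic (I n ω * β n * ⟪w', φ n ω⟫))
        atTop (𝓝 (if w = wtrue then 1 else 0)) := by
    intro ω hω w hw
    set Q : EuclideanSpace ℝ (Fin d) → ℕ → ℝ := fun w' N =>
      (∏ n ∈ Finset.range N, logistic (I n ω * β n * ⟪w', φ n ω⟫)) /
        (∏ n ∈ Finset.range N, logistic (I n ω * β n * ⟪wtrue, φ n ω⟫)) with hQdef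
    have hPrpos : ∀ (w' : EuclideanSpace ℝ (Fin d)) (N : ℕ),
        0 < ∏ n ∈ Finset.range N, logistic (I n ω * β n * ⟪w', φ n ω⟫) :=
      fun w' N => Finset.prod_pos fun i _ => logistic_pos _
    have hQtrue : ∀ N, Q wtrue N = 1 := fun N => div_self (hPrpos wtrue N).ne'
    have hfrac : ∀ N,
        (p w * ∏ n ∈ Finset.range N, logistic (I n ω * β n * ⟪w, φ n ω⟫)) /
          ∑ w' ∈ W, p w' * ∏ n ∈ Finset.range N, logistic (I n ω * β n * ⟪w', φ n ω⟫)
        = (p w * Q w N) / ∑ w' ∈ W, p w' * Q w' N := by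
      intro N
      have hsum : ∑ w' ∈ W, p w' * ∏ n ∈ Finset.range N, logistic (I n ω * β n * ⟪w', φ n ω⟫)
          = (∑ w' ∈ W, p w' * Q w' N) *
              ∏ n ∈ Finset.range N, logistic (I n ω * β n * ⟪wtrue, φ n ω⟫) := by
        rw [Finset.sum_mul]
        refine Finset.sum_congr rfl fun w' _ => ?_
        rw [hQdef, mul_assoc, div_mul_cancel₀ _ (hPrpos wtrue N).ne']
      have hnum : p w * ∏ n ∈ Finset.range N, logistic (I n ω * β n * ⟪w, φ n ω⟫)
          = (p w * Q w N) * ∏ n ∈ Finset.range N, logistic (I n ω * β n * ⟪wtrue, φ n ω⟫) := by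
        rw [hQdef, mul_assoc, div_mul_cancel₀ _ (hPrpos wtrue N).ne']
      rw [hnum, hsum, mul_div_mul_right _ _ (hPrpos wtrue N).ne']
    have hsumlim : Tendsto (fun N => ∑ w' ∈ W, p w' * Q w' N) atTop (𝓝 (p wtrue)) := by
      have hsplit : (fun N => ∑ w' ∈ W, p w' * Q w' N)
          = fun N => p wtrue + ∑ w' ∈ W.erase wtrue, p w' * Q w' N := by
        funext N
        rw [← Finset.add_sum_erase W _ hwtrue, hQtrue N, mul_one]
      rw [hsplit]
      have htail : Tendsto (fun N => ∑ w' ∈ W.erase wtrue, p w' * Q w' N) atTop (𝓝 0) := by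
        have h := tendsto_finset_sum (W.erase wtrue) (fun w' hw' => by
          have hne' : w' ≠ wtrue := Finset.ne_of_mem_erase hw'
          have hmem' : w' ∈ W := Finset.mem_of_mem_erase hw'
          exact (hω w' (Finset.mem_coe.mpr hmem') hne').const_mul (p w'))
        simpa using h
      have := tendsto_const_nhds (x := p wtrue) (f := atTop (α := ℕ)) |>.add htail
      simpa using this
    have hfun : (fun N =>
        (p w * ∏ n ∈ Finset.range N, logistic (I n ω * β n * ⟪w, φ n ω⟫)) /
          ∑ w' ∈ W, p w' * ∏ n ∈ Finset.range N, logistic (I n ω * β n * ⟪w', φ n ω⟫))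
        = fun N => (p w * Q w N) / ∑ w' ∈ W, p w' * Q w' N := funext hfrac
    rw [hfun]
    by_cases hne : w = wtrue
    · subst hne
      have hnum : (fun N => p w * Q w N) = fun _ => p w := by
        funext N; rw [hQtrue N, mul_one]
      rw [if_pos rfl]
      have hdiv := Tendsto.div (tendsto_const_nhds (x := p w) (f := atTop (α := ℕ)))
        hsumlim (hp w hw).ne'
      have : p w / p w = 1 := div_self (hp w hw).ne'
      rw [this] at hdiv
      have hfe : (fun N => p w * Q w N / ∑ w' ∈ W, p w' * Q w' N)
          = (fun _ => p w) / fun N => ∑ w' ∈ W, p w' * Q w' N := by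
        funext N
        rw [hQtrue N, mul_one]
        rfl
      rw [hfe]
      exact hdiv
    · rw [if_neg hne]
      have hnumlim : Tendsto (fun N => p w * Q w N) atTop (𝓝 0) := by
        have := (hω w (Finset.mem_coe.mpr hw) hne).const_mul (p w)
        simpa using this
      have hdiv := Tendsto.div hnumlim hsumlim (hp wtrue hwtrue).ne'
      have hfe : (fun N => p w * Q w N / ∑ w' ∈ W, p w' * Q w' N)
          = (fun N => p w * Q w N) / fun N => ∑ w' ∈ W, p w' * Q w' N := rfl
      rw [hfe]
      simpa using hdiv
  constructor
  · filter_upwards [hall] with ω hω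
    have := main ω hω wtrue hwtrue
    rw [if_pos rfl] at this
    exact this
  · intro w hw hne
    filter_upwards [hall] with ω hω
    have := main ω hω w hw
    rw [if_neg hne] at this
    exact this
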